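/- Let G be the edge-coloured graph with vertex set X ∪ Y where |X| = δ, X induces a rainbow complete graph, Y is independent, and for each x_i ∈ X all edges from x_i to Y receive a single new colour c_i (distinct for different i). Then every properly coloured cycle C in G satisfies |X ∩ V(C)| ≥ 2|Y ∩ V(C)|. -/

import Mathlib

open SimpleGraph

/-- A list of vertices forms a properly coloured walk: consecutive vertices are
adjacent and consecutive edges receive different colours. -/
def IsPCWalk {V : Type*} (G : SimpleGraph V) (c : V → V → ℕ) : List V → Prop
  | a :: b :: d :: rest => G.Adj a b ∧ c a b ≠ c b d ∧ IsPCWalk G c (b :: d :: rest)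
  | [a, b] => G.Adj a b
  | _ => True

/-- A properly coloured path: distinct vertices forming a properly coloured walk. -/
def IsPCPath {V : Type*} (G : SimpleGraph V) (c : V → V → ℕ) (l : List V) : Prop :=
  l.Nodup ∧ IsPCWalk G c l

/-- A properly coloured cycle, given as a list of (distinct) vertices of length ≥ 3;
closing the cycle by appending the first two vertices ensures all adjacencies and
colour conditions, including around the wrap-around vertex. -/
def IsPCCycle {V : Type*} (G : SimpleGraph V) (c : V → V → ℕ) (l : List V) : Prop :=
  3 ≤ l.length ∧ l.Nodup ∧ IsPCWalk G c (l ++ l.take 2)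

/-- The colour degree of `v`: the number of distinct colours on edges at `v`. -/
noncomputable def colourDeg {V : Type*} (G : SimpleGraph V) (c : V → V → ℕ) (v : V) : ℕ :=
  ((c v) '' {w | G.Adj v w}).ncard

/-- `colourDeg1 G c v a`: the number of edges at `v` whose colour differs from `a`.
`δ₁^c(G) ≥ k` is then `∀ v a, k ≤ colourDeg1 G c v a`. -/
noncomputable def colourDeg1 {V : Type*} (G : SimpleGraph V) (c : V → V → ℕ) (v : V) (a : ℕ) : ℕ :=
  {w | G.Adj v w ∧ c v w ≠ a}.ncard

/-- In the extremal example (`X` inducing a rainbow complete graph, `Y`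
independent, and all edges from `x ∈ X` to `Y` getting a single new colour `col x`),
every properly coloured cycle `C` satisfies `|X ∩ V(C)| ≥ 2 |Y ∩ V(C)|`. -/
theorem pcwalk_adj {V : Type*} (G : SimpleGraph V) (c : V → V → ℕ) :
    ∀ (m : List V), IsPCWalk G c m → ∀ (i : ℕ) (h : i + 1 < m.length),
      G.Adj (m[i]'(Nat.lt_of_succ_lt h)) (m[i+1]'h)
  | [], _, i, h => by simp at h
  | [a], _, i, h => by simp at h
  | [a, b], hw, i, h => by
    simp only [List.length_cons, List.length_nil] at h
    have : i = 0 := by omega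
    subst this
    simpa [IsPCWalk] using hw
  | a :: b :: d :: rest, hw, i, h => by
    obtain ⟨hab, _, hrest⟩ := hw
    match i with
    | 0 => simpa using hab
    | Nat.succ i =>
      exact pcwalk_adj G c (b :: d :: rest) hrest i (by simpa using h)

theorem pcwalk_col {V : Type*} (G : SimpleGraph V) (c : V → V → ℕ) :
    ∀ (m : List V), IsPCWalk G c m → ∀ (i : ℕ) (h : i + 2 < m.length),
      c (m[i]'(by omega)) (m[i+1]'(by omega)) ≠ c (m[i+1]'(by omega)) (m[i+2]'h)
  | [], _, i, h => by simp at h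
  | [a], _, i, h => by simp at h
  | [a, b], _, i, h => by simp at h
  | a :: b :: d :: rest, hw, i, h => by
    obtain ⟨_, hcol, hrest⟩ := hw
    match i with
    | 0 => simpa using hcol
    | Nat.succ i =>
      exact pcwalk_col G c (b :: d :: rest) hrest i (by simpa using h)

theorem cyc_mget {V : Type*} (l : List V) (n : ℕ)
    (hn : l.length = n) (hlen : 3 ≤ n) (hj : ∀ (j : ℕ), j < n + 2 → j < (l ++ l.take 2).length) :
    ∀ (j : ℕ) (h : j < n + 2),
      (l ++ l.take 2)[j]'(hj j h) =
        l.get (Fin.cast hn.symm ⟨j % n, Nat.mod_lt _ (by omega)⟩) := by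
  intro j h
  simp only [List.get_eq_getElem, Fin.coe_cast]
  rcases Nat.lt_or_ge j n with h' | h'
  · rw [List.getElem_append_left (by omega)]
    congr 1
    exact (Nat.mod_eq_of_lt h').symm
  · rw [List.getElem_append_right (by omega)]
    simp only [List.getElem_take]
    congr 1
    have h2 : j - l.length = 0 ∨ j - l.length = 1 := by omega
    rcases h2 with h2 | h2
    · rw [h2]
      have : j = n := by omega
      rw [this, Nat.mod_self]
    · rw [h2]
      have : j = n + 1 := by omega
      rw [this, Nat.add_mod_left, Nat.mod_eq_of_lt (by omega)]

theorem cyc_len {V : Type*} (l : List V) (n : ℕ) (hn : l.length = n) (hlen : 3 ≤ n) : (l ++ l.take 2).length = n + 2 := by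
  simp only [List.length_append, List.length_take]
  omega

theorem cyc_val1 (n : ℕ) (hlen : 3 ≤ n) [NeZero n] :
    ∀ i : Fin n, ((i + 1 : Fin n) : ℕ) = ((i : ℕ) + 1) % n := by
  intro i
  rw [Fin.val_add, Fin.val_one', Nat.mod_eq_of_lt (show 1 < n by omega)]

theorem pc_cycle_adj {V : Type*} (G : SimpleGraph V) (c : V → V → ℕ) (l : List V) (n : ℕ)
    (hn : l.length = n) (hlen : 3 ≤ n) [NeZero n] (hw : IsPCWalk G c (l ++ l.take 2)) :
    ∀ i : Fin n, G.Adj (l.get (Fin.cast hn.symm i)) (l.get (Fin.cast hn.symm (i + 1))) := by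
  intro i
  have hml := cyc_len l n hn hlen
  have hib := i.isLt
  have hj : ∀ (j : ℕ), j < n + 2 → j < (l ++ l.take 2).length := by omega
  have hi1 : (i : ℕ) + 1 < (l ++ l.take 2).length := by omega
  have h := pcwalk_adj G c _ hw i hi1
  rw [show (l ++ l.take 2)[(i : ℕ)]'(Nat.lt_of_succ_lt hi1) =
        (l ++ l.take 2)[(i : ℕ)]'(hj i (by omega)) from rfl,
      cyc_mget l n hn hlen hj i (by omega),
      show (l ++ l.take 2)[(i : ℕ) + 1]'hi1 =
        (l ++ l.take 2)[(i : ℕ) + 1]'(hj _ (by omega)) from rfl,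
      cyc_mget l n hn hlen hj ((i : ℕ) + 1) (by omega)] at h
  have e1 : (⟨(i : ℕ) % n, Nat.mod_lt _ (by omega)⟩ : Fin n) = i := by
    ext; exact Nat.mod_eq_of_lt i.isLt
  have e2 : (⟨((i : ℕ) + 1) % n, Nat.mod_lt _ (by omega)⟩ : Fin n) = i + 1 := by
    ext; exact (cyc_val1 n hlen i).symm
  rwa [e1, e2] at h

theorem pc_cycle_col {V : Type*} (G : SimpleGraph V) (c : V → V → ℕ) (l : List V) (n : ℕ)
    (hn : l.length = n) (hlen : 3 ≤ n) [NeZero n] (hw : IsPCWalk G c (l ++ l.take 2)) :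
    ∀ i : Fin n, c (l.get (Fin.cast hn.symm i)) (l.get (Fin.cast hn.symm (i + 1))) ≠
      c (l.get (Fin.cast hn.symm (i + 1))) (l.get (Fin.cast hn.symm (i + 1 + 1))) := by
  intro i
  have hml := cyc_len l n hn hlen
  have hib := i.isLt
  have hj : ∀ (j : ℕ), j < n + 2 → j < (l ++ l.take 2).length := by omega
  have hi2 : (i : ℕ) + 2 < (l ++ l.take 2).length := by omega
  have h := pcwalk_col G c _ hw i hi2
  rw [show ((l ++ l.take 2)[(i : ℕ)]'(by omega) : V) =
        (l ++ l.take 2)[(i : ℕ)]'(hj i (by omega)) from rfl,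
      cyc_mget l n hn hlen hj i (by omega),
      show ((l ++ l.take 2)[(i : ℕ) + 1]'(by omega) : V) =
        (l ++ l.take 2)[(i : ℕ) + 1]'(hj _ (by omega)) from rfl,
      cyc_mget l n hn hlen hj ((i : ℕ) + 1) (by omega),
      show ((l ++ l.take 2)[(i : ℕ) + 2]'hi2 : V) =
        (l ++ l.take 2)[(i : ℕ) + 2]'(hj _ (by omega)) from rfl,
      cyc_mget l n hn hlen hj ((i : ℕ) + 2) (by omega)] at h
  have e1 : (⟨(i : ℕ) % n, Nat.mod_lt _ (by omega)⟩ : Fin n) = i := by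
    ext; exact Nat.mod_eq_of_lt i.isLt
  have e2 : (⟨((i : ℕ) + 1) % n, Nat.mod_lt _ (by omega)⟩ : Fin n) = i + 1 := by
    ext; exact (cyc_val1 n hlen i).symm
  have e3 : (⟨((i : ℕ) + 2) % n, Nat.mod_lt _ (by omega)⟩ : Fin n) = i + 1 + 1 := by
    ext
    have a1 : ((i + 1 + 1 : Fin n) : ℕ) = (((i + 1 : Fin n) : ℕ) + 1) % n :=
      cyc_val1 n hlen (i + 1)
    have a2 : ((i + 1 : Fin n) : ℕ) = ((i : ℕ) + 1) % n := cyc_val1 n hlen i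
    simp only [a1, a2, Nat.mod_add_mod]
  rwa [e1, e2, e3] at h


theorem stmt4 {V : Type*} [Fintype V] [DecidableEq V] (G : SimpleGraph V) (c : V → V → ℕ)
    (X Y : Finset V) (col : V → ℕ)
    (hc : ∀ u v, c u v = c v u)
    (hdisj : Disjoint X Y)
    (hcover : ∀ v : V, v ∈ X ∨ v ∈ Y)
    (hXcomplete : ∀ x ∈ X, ∀ x' ∈ X, x ≠ x' → G.Adj x x')
    (hYindep : ∀ y ∈ Y, ∀ y' ∈ Y, ¬ G.Adj y y')
    (hXY : ∀ x ∈ X, ∀ y ∈ Y, G.Adj x y)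
    (hcXY : ∀ x ∈ X, ∀ y ∈ Y, c x y = col x)
    (hcolinj : ∀ x ∈ X, ∀ x' ∈ X, col x = col x' → x = x')
    (hrainbow : ∀ x ∈ X, ∀ x' ∈ X, ∀ u ∈ X, ∀ u' ∈ X, x ≠ x' → u ≠ u' →
      ¬(x = u ∧ x' = u') → ¬(x = u' ∧ x' = u) → c x x' ≠ c u u')
    (hnew : ∀ x ∈ X, ∀ u ∈ X, ∀ u' ∈ X, u ≠ u' → col x ≠ c u u') :
    ∀ l : List V, IsPCCycle G c l →
      2 * (l.toFinset ∩ Y).card ≤ (l.toFinset ∩ X).card := by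
  intro l hl
  obtain ⟨hlen0, hnd, hw⟩ := hl
  obtain ⟨n, hn⟩ : ∃ n, l.length = n := ⟨_, rfl⟩
  have hlen : 3 ≤ n := hn ▸ hlen0
  haveI : NeZero n := ⟨by omega⟩
  have hA := pc_cycle_adj G c l n hn hlen hw
  have hP := pc_cycle_col G c l n hn hlen hw
  set f : Fin n → V := fun i => l.get (Fin.cast hn.symm i) with hf
  have hfinj : Function.Injective f := by
    intro i j hij
    have := List.nodup_iff_injective_get.mp hnd hij
    have hv : ((Fin.cast hn.symm i : Fin l.length) : ℕ) = ((Fin.cast hn.symm j : Fin l.length) : ℕ) := by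
      rw [this]
    ext
    simpa using hv
  -- index sets
  set S : Finset (Fin n) := Finset.univ.filter (fun i => f i ∈ Y) with hS
  set T : Finset (Fin n) := Finset.univ.filter (fun i => f i ∈ X) with hT
  have hmemS : ∀ i : Fin n, i ∈ S ↔ f i ∈ Y := by intro i; simp [hS]
  have hmemT : ∀ i : Fin n, i ∈ T ↔ f i ∈ X := by intro i; simp [hT]
  have hST1 : ∀ i ∈ S, i + 1 ∈ T := by
    intro i hi
    rw [hmemS] at hi
    rw [hmemT]
    rcases hcover (f (i + 1)) with h | h
    · exact h
    · exact absurd (hA i) (hYindep _ hi _ h)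
  have hST2 : ∀ i ∈ S, i - 1 ∈ T := by
    intro i hi
    rw [hmemS] at hi
    rw [hmemT]
    have hadj := hA (i - 1)
    simp only [sub_add_cancel] at hadj
    rcases hcover (f (i - 1)) with h | h
    · exact h
    · exact absurd hadj (hYindep _ h _ hi)
  have hkey : ∀ i ∈ S, ∀ i' ∈ S, i + 1 ≠ i' - 1 := by
    intro i hi i' hi' heq
    have hx : i + 1 ∈ T := hST1 i hi
    rw [hmemT] at hx
    rw [hmemS] at hi hi'
    have hii' : i + 1 + 1 = i' := by
      rw [heq]
      exact sub_add_cancel _ _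
    have hP' := hP i
    simp only [hii'] at hP'
    have e1 : c (f i) (f (i + 1)) = col (f (i + 1)) := by
      rw [hc]; exact hcXY _ hx _ hi
    have e2 : c (f (i + 1)) (f i') = col (f (i + 1)) := hcXY _ hx _ hi'
    rw [e1, e2] at hP'
    exact hP' rfl
  have hdisj2 : Disjoint (S.image (· + 1)) (S.image (· - 1)) := by
    rw [Finset.disjoint_left]
    intro j hj1 hj2
    obtain ⟨i, hi, rfl⟩ := Finset.mem_image.mp hj1
    obtain ⟨i', hi', h'⟩ := Finset.mem_image.mp hj2
    exact hkey i hi i' hi' h'.symm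
  have hsub : S.image (· + 1) ∪ S.image (· - 1) ⊆ T := by
    intro j hj
    rcases Finset.mem_union.mp hj with h | h
    · obtain ⟨i, hi, rfl⟩ := Finset.mem_image.mp h
      exact hST1 i hi
    · obtain ⟨i, hi, rfl⟩ := Finset.mem_image.mp h
      exact hST2 i hi
  have hcard : S.card + S.card ≤ T.card := by
    calc S.card + S.card
        = (S.image (· + 1) ∪ S.image (· - 1)).card := by
          rw [Finset.card_union_of_disjoint hdisj2,
              Finset.card_image_of_injective _ (add_left_injective 1),
              Finset.card_image_of_injective _ sub_left_injective]
      _ ≤ T.card := Finset.card_le_card hsub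
  -- translate to vertex counts
  have hmem : ∀ i : Fin n, f i ∈ l := by
    intro i
    exact List.mem_iff_get.mpr ⟨Fin.cast hn.symm i, rfl⟩
  have himgY : S.image f = l.toFinset ∩ Y := by
    ext v
    simp only [Finset.mem_image, Finset.mem_inter, List.mem_toFinset]
    constructor
    · rintro ⟨i, hi, rfl⟩
      rw [hmemS] at hi
      exact ⟨hmem i, hi⟩
    · rintro ⟨hv, hvY⟩
      obtain ⟨j, rfl⟩ := List.mem_iff_get.mp hv
      refine ⟨Fin.cast hn j, ?_, ?_⟩
      · rw [hmemS]
        show l.get (Fin.cast hn.symm (Fin.cast hn j)) ∈ Y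
        simpa using hvY
      · show l.get (Fin.cast hn.symm (Fin.cast hn j)) = l.get j
        rfl
  have himgX : T.image f ⊆ l.toFinset ∩ X := by
    intro v hv
    obtain ⟨i, hi, rfl⟩ := Finset.mem_image.mp hv
    rw [hmemT] at hi
    exact Finset.mem_inter.mpr ⟨List.mem_toFinset.mpr (hmem i), hi⟩
  have hYcard : (l.toFinset ∩ Y).card = S.card := by
    rw [← himgY, Finset.card_image_of_injective _ hfinj]
  have hXcard : T.card ≤ (l.toFinset ∩ X).card := by
    rw [← Finset.card_image_of_injective T hfinj]
    exact Finset.card_le_card himgX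
  rw [hYcard, two_mul]
  exact le_trans hcard hXcard
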